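/- If G is a non-abelian CSA group, then every nontrivial normal subgroup of G is itself a non-abelian CSA group; in particular, no nontrivial normal subgroup of G is abelian. -/

import Mathlib

universe u

/-- A group is *CSA* if every maximal abelian subgroup `A` is malnormal:
for every `g ∉ A`, `A ⊓ gAg⁻¹ = ⊥`. -/
def IsCSA (G : Type u) [Group G] : Prop :=
  ∀ A : Subgroup G, Maximal (fun H : Subgroup G => IsMulCommutative H) A →
    ∀ g : G, g ∉ A → A ⊓ Subgroup.map (MulAut.conj g).toMonoidHom A = ⊥

/-- Every commutative subgroup is contained in a maximal commutative subgroup. -/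
lemma exists_maximal_isCommutative {G : Type u} [Group G] (B : Subgroup G)
    (hB : IsMulCommutative B) :
    ∃ A : Subgroup G, B ≤ A ∧ Maximal (fun H : Subgroup G => IsMulCommutative H) A := by
  obtain ⟨m, hm, hmax⟩ := zorn_le_nonempty₀ {A : Subgroup G | IsMulCommutative A}
    (fun c hcs hc y hy => by
      refine ⟨sSup c, ?_, fun z hz => le_sSup hz⟩
      have hdir : DirectedOn (· ≤ ·) c := hc.directedOn
      have hne : c.Nonempty := ⟨y, hy⟩
      constructor
      constructor
      rintro ⟨a, ha⟩ ⟨b, hb⟩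
      obtain ⟨A₁, hA₁c, ha₁⟩ := (Subgroup.mem_sSup_of_directedOn hne hdir).1 ha
      obtain ⟨A₂, hA₂c, hb₂⟩ := (Subgroup.mem_sSup_of_directedOn hne hdir).1 hb
      obtain ⟨A₃, hA₃c, h13, h23⟩ := hdir A₁ hA₁c A₂ hA₂c
      have : IsMulCommutative A₃ := hcs hA₃c
      have := Subgroup.mul_comm_of_mem_isMulCommutative (H := A₃) (h13 ha₁) (h23 hb₂)
      ext
      simpa using this) B hB
  exact ⟨m, hm, hmax⟩

/-- Every nontrivial normal subgroup of a non-abelian CSA group is itself a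
non-abelian CSA group; in particular it is not abelian. -/
theorem stmt_2 (G : Type u) [Group G] (hcsa : IsCSA G)
    (hna : ∃ a b : G, a * b ≠ b * a)
    (N : Subgroup G) (hN : N.Normal) (hNnt : N ≠ ⊥) :
    IsCSA N ∧ ∃ a b : N, a * b ≠ b * a := by
  constructor
  · -- N is CSA
    intro B hB g hg
    -- push B to a subgroup of G, extend to a maximal commutative subgroup A
    have hBcomm : IsMulCommutative (B.map N.subtype) := by
      constructor
      constructor
      rintro ⟨a, ha⟩ ⟨b, hb⟩
      obtain ⟨a', ha', rfl⟩ := ha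
      obtain ⟨b', hb', rfl⟩ := hb
      have : a' * b' = b' * a' := by
        haveI := hB.prop
        exact Subgroup.mul_comm_of_mem_isMulCommutative (H := B) ha' hb'
      ext
      simpa [Subtype.ext_iff] using congrArg (N.subtype) this
    obtain ⟨A, hBA, hA⟩ := exists_maximal_isCommutative _ hBcomm
    -- g ∉ A (as an element of G), else B ⊔ g would be commutative in N
    have hgA : (g : G) ∉ A := by
      intro hgA
      apply hg
      have hC : IsMulCommutative (A.comap N.subtype) := by
        constructor
        constructor
        rintro ⟨a, ha⟩ ⟨b, hb⟩
        haveI := hA.prop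
        have : (a : G) * b = b * a :=
          Subgroup.mul_comm_of_mem_isMulCommutative (H := A) ha hb
        have h2 : a * b = b * a := Subtype.ext this
        exact Subtype.ext h2
      have hBC : B ≤ A.comap N.subtype := by
        intro b hb
        exact hBA ⟨b, hb, rfl⟩
      exact hB.2 hC hBC (by exact hgA)
    rw [eq_bot_iff]
    rintro x ⟨hx1, hx2⟩
    obtain ⟨b, hb, hbx⟩ := hx2
    have hxA : (x : G) ∈ A ⊓ Subgroup.map (MulAut.conj (g : G)).toMonoidHom A := by
      refine ⟨hBA ⟨x, hx1, rfl⟩, ⟨(b : G), hBA ⟨b, hb, rfl⟩, ?_⟩⟩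
      have hbx' : g * b * g⁻¹ = x := hbx
      have h3 : ((g * b * g⁻¹ : N) : G) = (x : G) := congrArg Subtype.val hbx'
      push_cast at h3
      exact h3
    rw [hcsa A hA g hgA] at hxA
    have hx1' : (x : G) = 1 := hxA
    rw [Subgroup.mem_bot]
    exact Subtype.ext hx1'
  · -- N is non-abelian
    by_contra hcomm
    push_neg at hcomm
    have hNcomm : IsMulCommutative N := by
      constructor
      constructor
      intro a b
      exact hcomm a b
    obtain ⟨A, hNA, hA⟩ := exists_maximal_isCommutative N hNcomm
    obtain ⟨n, hn1⟩ := Subgroup.ne_bot_iff_exists_ne_one.mp hNnt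
    have hGA : ∀ g : G, g ∈ A := by
      intro g
      by_contra hgA
      have hmem : (n : G) ∈ A ⊓ Subgroup.map (MulAut.conj g).toMonoidHom A := by
        refine ⟨hNA n.2, g⁻¹ * (n : G) * g, hNA ?_, ?_⟩
        · simpa using hN.conj_mem _ n.2 g⁻¹
        · simp
          group
      rw [hcsa A hA g hgA] at hmem
      exact hn1 (Subtype.ext hmem)
    obtain ⟨a, b, hab⟩ := hna
    haveI := hA.prop
    exact hab (Subgroup.mul_comm_of_mem_isMulCommutative (H := A) (hGA a) (hGA b))
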